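/- Let K^• be the s-th (stupid, from below) truncation of a combinatorial n-cube complex, i.e., the full subcomplex on vertices of {0,1}^n whose coordinate sum is at least s, with 0 < s ≤ n. Then the cohomology of K^• in its lowest degree has dimension binomial(n-1, s-1) over k, and all higher cohomology groups vanish. -/

import Mathlib

/-!
STATEMENT 1: The `s`-th (stupid, from below) truncation of a combinatorial
`n`-cube complex (`0 < s ≤ n`) has cohomology of dimension `binomial (n-1) (s-1)`
in its lowest degree `s`, and all higher cohomology groups vanish.

The degree-`p` term is the space of `k`-valued functions on the `p`-element
subsets of `Fin n` (vertices of `{0,1}^n` of coordinate sum `p`); the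
differentials have nonzero matrix entries exactly on cube edges and compose to
zero.  Lowest-degree cohomology is `ker (d s)`; at degree `p > s` it is
`ker (d p) / range (d (p-1))`.
-/


lemma tcc_star {k : Type*} [Field k] {n : ℕ}
    (c : Finset (Fin n) → Finset (Fin n) → k)
    (d : ∀ p : ℕ, ({S : Finset (Fin n) // S.card = p} → k) →ₗ[k]
      ({S : Finset (Fin n) // S.card = p + 1} → k))
    (hd : ∀ (p : ℕ) (f : {S : Finset (Fin n) // S.card = p} → k)
      (T : {S : Finset (Fin n) // S.card = p + 1}),
      d p f T = ∑ S : {S : Finset (Fin n) // S.card = p}, c S.1 T.1 * f S)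
    (hdd : ∀ p : ℕ, (d (p + 1)) ∘ₗ (d p) = 0)
    (p : ℕ) (S : Finset (Fin n)) (hS : S.card = p)
    (U : Finset (Fin n)) (hU : U.card = p + 2) :
    ∑ T : {T : Finset (Fin n) // T.card = p + 1}, c S T.1 * c T.1 U = 0 := by
  classical
  set f : {S' : Finset (Fin n) // S'.card = p} → k :=
    fun S' => if S'.1 = S then 1 else 0 with hf
  have h1 : ∀ T : {T : Finset (Fin n) // T.card = p + 1}, d p f T = c S T.1 := by
    intro T
    rw [hd, Fintype.sum_eq_single (⟨S, hS⟩ : {S' : Finset (Fin n) // S'.card = p})]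
    · simp [hf]
    · intro x hx
      have hx1 : x.1 ≠ S := fun h => hx (Subtype.ext h)
      simp [hf, hx1]
  have h2 : d (p + 1) (d p f) ⟨U, hU⟩ = 0 := by
    rw [← LinearMap.comp_apply, hdd]; rfl
  rw [hd] at h2
  simp only [h1] at h2
  rw [← h2]
  exact Finset.sum_congr rfl (fun T _ => mul_comm _ _)


lemma tcc_between {n : ℕ} {p : ℕ} {S T T' T'' U : Finset (Fin n)}
    (hS : S.card = p) (hT : T.card = p + 1) (hT' : T'.card = p + 1)
    (hT'' : T''.card = p + 1) (hU : U.card = p + 2)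
    (hST : S ⊆ T) (hTU : T ⊆ U) (hST' : S ⊆ T') (hT'U : T' ⊆ U)
    (hST'' : S ⊆ T'') (hT''U : T'' ⊆ U) (hne : T ≠ T') : T'' = T ∨ T'' = T' := by
  classical
  have hrec : ∀ {W : Finset (Fin n)}, S ⊆ W → S ∪ (W \ S) = W :=
    fun h => Finset.union_sdiff_of_subset h
  have cTS : (T \ S).card = 1 := by rw [Finset.card_sdiff_of_subset hST, hT, hS]; omega
  have cT'S : (T' \ S).card = 1 := by rw [Finset.card_sdiff_of_subset hST', hT', hS]; omega
  have cT''S : (T'' \ S).card = 1 := by rw [Finset.card_sdiff_of_subset hST'', hT'', hS]; omega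
  have cUS : (U \ S).card = 2 := by
    rw [Finset.card_sdiff_of_subset (hST.trans hTU), hU, hS]; omega
  obtain ⟨a, ha⟩ := Finset.card_eq_one.mp cTS
  obtain ⟨b, hb⟩ := Finset.card_eq_one.mp cT'S
  obtain ⟨x, hx⟩ := Finset.card_eq_one.mp cT''S
  have hab : a ≠ b := by
    intro h
    apply hne
    rw [← hrec hST, ← hrec hST', ha, hb, h]
  have haU : a ∈ U \ S := by
    have : T \ S ⊆ U \ S := Finset.sdiff_subset_sdiff hTU (Finset.Subset.refl S)
    exact this (ha ▸ Finset.mem_singleton_self a)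
  have hbU : b ∈ U \ S := by
    have : T' \ S ⊆ U \ S := Finset.sdiff_subset_sdiff hT'U (Finset.Subset.refl S)
    exact this (hb ▸ Finset.mem_singleton_self b)
  have hUS : U \ S = {a, b} := by
    refine (Finset.eq_of_subset_of_card_le ?_ ?_).symm
    · intro y hy
      rcases Finset.mem_insert.mp hy with h | h
      · exact h ▸ haU
      · exact (Finset.mem_singleton.mp h) ▸ hbU
    · rw [cUS, Finset.card_pair hab]
  have hxU : x ∈ U \ S := by
    have : T'' \ S ⊆ U \ S := Finset.sdiff_subset_sdiff hT''U (Finset.Subset.refl S)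
    exact this (hx ▸ Finset.mem_singleton_self x)
  rw [hUS] at hxU
  rcases Finset.mem_insert.mp hxU with h | h
  · left; rw [← hrec hST'', hx, h, ← ha, hrec hST]
  · right
    rw [← hrec hST'', hx, Finset.mem_singleton.mp h, ← hb, hrec hST']


lemma tcc_square {k : Type*} [Field k] {n : ℕ}
    (c : Finset (Fin n) → Finset (Fin n) → k)
    (hc : ∀ S T : Finset (Fin n), c S T ≠ 0 ↔ (S ⊆ T ∧ T.card = S.card + 1))
    (hstar : ∀ (p : ℕ) (S : Finset (Fin n)), S.card = p → ∀ (U : Finset (Fin n)),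
      U.card = p + 2 →
      ∑ T : {T : Finset (Fin n) // T.card = p + 1}, c S T.1 * c T.1 U = 0)
    (hbetween : ∀ {p : ℕ} {S T T' T'' U : Finset (Fin n)},
      S.card = p → T.card = p + 1 → T'.card = p + 1 → T''.card = p + 1 → U.card = p + 2 →
      S ⊆ T → T ⊆ U → S ⊆ T' → T' ⊆ U → S ⊆ T'' → T'' ⊆ U → T ≠ T' → T'' = T ∨ T'' = T')
    {p : ℕ} {S T T' U : Finset (Fin n)}
    (hS : S.card = p) (hT : T.card = p + 1) (hT' : T'.card = p + 1) (hU : U.card = p + 2)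
    (hST : S ⊆ T) (hTU : T ⊆ U) (hST' : S ⊆ T') (hT'U : T' ⊆ U) (hne : T ≠ T') :
    c S T * c T U + c S T' * c T' U = 0 := by
  classical
  have h0 := hstar p S hS U hU
  have hpair : ∑ T'' : {W : Finset (Fin n) // W.card = p + 1}, c S T''.1 * c T''.1 U =
      ∑ T'' ∈ ({⟨T, hT⟩, ⟨T', hT'⟩} : Finset {W : Finset (Fin n) // W.card = p + 1}),
        c S T''.1 * c T''.1 U := by
    symm
    apply Finset.sum_subset (Finset.subset_univ _)
    intro x _ hx
    by_contra hne0
    have h1 : c S x.1 ≠ 0 := fun h => hne0 (by rw [h, zero_mul])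
    have h2 : c x.1 U ≠ 0 := fun h => hne0 (by rw [h, mul_zero])
    obtain ⟨hSx, _⟩ := (hc _ _).mp h1
    obtain ⟨hxU, _⟩ := (hc _ _).mp h2
    have := hbetween hS hT hT' x.2 hU hST hTU hST' hT'U hSx hxU hne
    apply hx
    rcases this with h | h
    · exact Finset.mem_insert.mpr (Or.inl (Subtype.ext h))
    · exact Finset.mem_insert.mpr (Or.inr (Finset.mem_singleton.mpr (Subtype.ext h)))
  rw [hpair, Finset.sum_pair (fun h => hne (congrArg Subtype.val h))] at h0
  exact h0


lemma tcc_field {k : Type*} [Field k] (A B E F x : k) (hB : B ≠ 0) (hE : E ≠ 0)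
    (h : A * E + B * F = 0) : A * (B⁻¹ * x) + E⁻¹ * (F * x) = 0 := by
  field_simp
  linear_combination x * h

noncomputable def tccH {k : Type*} [Field k] {n : ℕ}
    (c : Finset (Fin n) → Finset (Fin n) → k) (z : Fin n) (p : ℕ)
    (g : {S : Finset (Fin n) // S.card = p + 1} → k)
    (S : {S : Finset (Fin n) // S.card = p}) : k :=
  if hz : z ∉ S.1 then
    (c S.1 (insert z S.1))⁻¹ *
      g ⟨insert z S.1, by rw [Finset.card_insert_of_notMem hz, S.2]⟩
  else 0

lemma tcc_homotopy {k : Type*} [Field k] {n : ℕ}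
    (c : Finset (Fin n) → Finset (Fin n) → k)
    (hc : ∀ S T : Finset (Fin n), c S T ≠ 0 ↔ (S ⊆ T ∧ T.card = S.card + 1))
    (d : ∀ p : ℕ, ({S : Finset (Fin n) // S.card = p} → k) →ₗ[k]
      ({S : Finset (Fin n) // S.card = p + 1} → k))
    (hd : ∀ (p : ℕ) (f : {S : Finset (Fin n) // S.card = p} → k)
      (T : {S : Finset (Fin n) // S.card = p + 1}),
      d p f T = ∑ S : {S : Finset (Fin n) // S.card = p}, c S.1 T.1 * f S)
    (hsq : ∀ {p : ℕ} {S T T' U : Finset (Fin n)},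
      S.card = p → T.card = p + 1 → T'.card = p + 1 → U.card = p + 2 →
      S ⊆ T → T ⊆ U → S ⊆ T' → T' ⊆ U → T ≠ T' →
      c S T * c T U + c S T' * c T' U = 0)
    (z : Fin n) (p : ℕ) (g : {S : Finset (Fin n) // S.card = p + 1} → k)
    (T : {S : Finset (Fin n) // S.card = p + 1}) :
    d p (tccH c z p g) T + tccH c z (p + 1) (d (p + 1) g) T = g T := by
  classical
  by_cases hzT : z ∈ T.1
  · -- second term vanishes, first term is g T
    have h2 : tccH c z (p + 1) (d (p + 1) g) T = 0 := by
      simp only [tccH]; rw [dif_neg (not_not_intro hzT)]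
    rw [h2, add_zero, hd]
    have hacard : (T.1.erase z).card = p := by
      rw [Finset.card_erase_of_mem hzT, T.2]; omega
    rw [Fintype.sum_eq_single (⟨T.1.erase z, hacard⟩ : {S : Finset (Fin n) // S.card = p})]
    · have hza : z ∉ T.1.erase z := Finset.notMem_erase z T.1
      simp only [tccH]
      rw [dif_pos hza]
      have hins : insert z (T.1.erase z) = T.1 := Finset.insert_erase hzT
      have harg : ∀ pf, (⟨insert z (T.1.erase z), pf⟩ :
          {S : Finset (Fin n) // S.card = p + 1}) = T := fun _ => Subtype.ext hins
      rw [harg, hins]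
      have hcne : c (T.1.erase z) T.1 ≠ 0 := (hc _ _).mpr
        ⟨Finset.erase_subset _ _, by rw [Finset.card_erase_of_mem hzT, T.2]; omega⟩
      rw [mul_inv_cancel_left₀ hcne]
    · intro S hSa
      by_cases h0 : c S.1 T.1 = 0
      · rw [h0, zero_mul]
      · obtain ⟨hsub, _⟩ := (hc _ _).mp h0
        by_cases hzS : z ∈ S.1
        · simp only [tccH]; rw [dif_neg (not_not_intro hzS), mul_zero]
        · exfalso
          apply hSa
          apply Subtype.ext
          have h1 : S.1 ⊆ T.1.erase z := Finset.subset_erase.mpr ⟨hsub, hzS⟩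
          exact Finset.eq_of_subset_of_card_le h1 (by rw [hacard, S.2])
  · -- z ∉ T : the interesting case
    have hT0 : (insert z T.1).card = p + 1 + 1 := by
      rw [Finset.card_insert_of_notMem hzT, T.2]
    have hcTT0 : c T.1 (insert z T.1) ≠ 0 := (hc _ _).mpr
      ⟨Finset.subset_insert _ _, by rw [hT0, T.2]⟩
    have e2 : tccH c z (p + 1) (d (p + 1) g) T =
        (c T.1 (insert z T.1))⁻¹ *
          ∑ T' : {S : Finset (Fin n) // S.card = p + 1}, c T'.1 (insert z T.1) * g T' := by
      simp only [tccH]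
      rw [dif_pos hzT, hd]
    have e1 : (d p (tccH c z p g)) T =
        ∑ T' : {S : Finset (Fin n) // S.card = p + 1},
          (if z ∈ T'.1 then
            c (T'.1.erase z) T.1 * ((c (T'.1.erase z) T'.1)⁻¹ * g T') else 0) := by
      rw [hd]
      refine Finset.sum_bij_ne_zero
        (fun S h₁ h₂ => ⟨insert z S.1, ?_⟩) ?_ ?_ ?_ ?_
      · -- card proof
        have hzS : z ∉ S.1 := by
          intro hzS
          apply h₂
          simp only [tccH]
          rw [dif_neg (not_not_intro hzS), mul_zero]
        rw [Finset.card_insert_of_notMem hzS, S.2]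
      · intro a h₁ h₂; exact Finset.mem_univ _
      · intro a₁ h₁₁ h₁₂ a₂ h₂₁ h₂₂ heq
        have hz1 : z ∉ a₁.1 := by
          intro hzS; apply h₁₂; simp only [tccH]
          rw [dif_neg (not_not_intro hzS), mul_zero]
        have hz2 : z ∉ a₂.1 := by
          intro hzS; apply h₂₂; simp only [tccH]
          rw [dif_neg (not_not_intro hzS), mul_zero]
        have := congrArg Subtype.val heq
        simp only at this
        apply Subtype.ext
        rw [← Finset.erase_insert hz1, ← Finset.erase_insert hz2, this]
      · intro b _ hb
        have hzb : z ∈ b.1 := by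
          by_contra hzb
          rw [if_neg hzb] at hb
          exact hb rfl
        rw [if_pos hzb] at hb
        have hbc : (b.1.erase z).card = p := by
          rw [Finset.card_erase_of_mem hzb, b.2]; omega
        refine ⟨⟨b.1.erase z, hbc⟩, Finset.mem_univ _, ?_, ?_⟩
        · -- f a ≠ 0
          have hzeb : z ∉ b.1.erase z := Finset.notMem_erase z b.1
          have hfa : c (b.1.erase z) T.1 *
              tccH c z p g ⟨b.1.erase z, hbc⟩ =
              c (b.1.erase z) T.1 * ((c (b.1.erase z) b.1)⁻¹ * g b) := by
            simp only [tccH]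
            rw [dif_pos hzeb]
            have harg : ∀ pf, (⟨insert z (b.1.erase z), pf⟩ :
                {S : Finset (Fin n) // S.card = p + 1}) = b :=
              fun _ => Subtype.ext (Finset.insert_erase hzb)
            rw [harg, Finset.insert_erase hzb]
          rw [hfa]
          exact hb
        · exact Subtype.ext (Finset.insert_erase hzb)
      · intro a h₁ h₂
        have hzS : z ∉ a.1 := by
          intro hzS; apply h₂; simp only [tccH]
          rw [dif_neg (not_not_intro hzS), mul_zero]
        have htccH : tccH c z p g a = (c a.1 (insert z a.1))⁻¹ *
            g ⟨insert z a.1, by rw [Finset.card_insert_of_notMem hzS, a.2]⟩ :=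
          dif_pos hzS
        rw [if_pos (Finset.mem_insert_self z a.1)]
        conv_lhs => rw [htccH]
        rw [Finset.erase_insert hzS]
    rw [e1, e2, Finset.mul_sum, ← Finset.sum_add_distrib]
    have hoff : ∀ T' : {S : Finset (Fin n) // S.card = p + 1}, T' ≠ T →
        ((if z ∈ T'.1 then
            c (T'.1.erase z) T.1 * ((c (T'.1.erase z) T'.1)⁻¹ * g T') else 0) +
          (c T.1 (insert z T.1))⁻¹ * (c T'.1 (insert z T.1) * g T')) = 0 := by
      intro T' hT'ne
      by_cases hzT'' : z ∈ T'.1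
      · rw [if_pos hzT'']
        have hST' : T'.1.erase z ⊆ T'.1 := Finset.erase_subset _ _
        have hScard : (T'.1.erase z).card = p := by
          rw [Finset.card_erase_of_mem hzT'', T'.2]; omega
        have hcST'ne : c (T'.1.erase z) T'.1 ≠ 0 := (hc _ _).mpr
          ⟨hST', by rw [T'.2, hScard]⟩
        by_cases h0 : c (T'.1.erase z) T.1 = 0
        · rw [h0, zero_mul, zero_add]
          have hz0 : c T'.1 (insert z T.1) = 0 := by
            by_contra hne0
            obtain ⟨hsub, _⟩ := (hc _ _).mp hne0
            have hsub2 : T'.1.erase z ⊆ T.1 := by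
              calc T'.1.erase z ⊆ (insert z T.1).erase z :=
                    Finset.erase_subset_erase z hsub
                _ = T.1 := Finset.erase_insert hzT
            exact (hc _ _).mpr ⟨hsub2, by rw [T.2, hScard]⟩ h0
          rw [hz0, zero_mul, mul_zero]
        · obtain ⟨hsub, _⟩ := (hc _ _).mp h0
          have hT'ins : T'.1 = insert z (T'.1.erase z) :=
            (Finset.insert_erase hzT'').symm
          have hTne : T.1 ≠ T'.1 := fun h => hzT (by rw [h]; exact hzT'')
          have hsq' := hsq hScard T.2 T'.2 hT0 hsub (Finset.subset_insert _ _)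
            hST' (by rw [hT'ins]; exact Finset.insert_subset_insert z hsub) hTne
          exact tcc_field _ _ _ _ (g T') hcST'ne hcTT0 hsq'
      · rw [if_neg hzT'', zero_add]
        have hz0 : c T'.1 (insert z T.1) = 0 := by
          by_contra hne0
          obtain ⟨hsub, _⟩ := (hc _ _).mp hne0
          apply hT'ne
          apply Subtype.ext
          have h1 : T'.1 ⊆ T.1 := by
            intro x hx
            rcases Finset.mem_insert.mp (hsub hx) with h | h
            · exact absurd (h ▸ hx) hzT''
            · exact h
          exact Finset.eq_of_subset_of_card_le h1 (by rw [T.2, T'.2])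
        rw [hz0, zero_mul, mul_zero]
    rw [Fintype.sum_eq_single T hoff]
    rw [if_neg hzT, zero_add, inv_mul_cancel_left₀ hcTT0]

theorem truncated_cube_cohomology (k : Type*) [Field k] [CharZero k]
    (n s : ℕ) (hs : 0 < s) (hsn : s ≤ n)
    (c : Finset (Fin n) → Finset (Fin n) → k)
    (hc : ∀ S T : Finset (Fin n), c S T ≠ 0 ↔ (S ⊆ T ∧ T.card = S.card + 1))
    (d : ∀ p : ℕ, ({S : Finset (Fin n) // S.card = p} → k) →ₗ[k]
      ({S : Finset (Fin n) // S.card = p + 1} → k))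
    (hd : ∀ (p : ℕ) (f : {S : Finset (Fin n) // S.card = p} → k)
      (T : {S : Finset (Fin n) // S.card = p + 1}),
      d p f T = ∑ S : {S : Finset (Fin n) // S.card = p}, c S.1 T.1 * f S)
    (hdd : ∀ p : ℕ, (d (p + 1)) ∘ₗ (d p) = 0) :
    Module.finrank k (LinearMap.ker (d s)) = Nat.choose (n - 1) (s - 1) ∧
    ∀ p : ℕ, s ≤ p → LinearMap.ker (d (p + 1)) = LinearMap.range (d p) := by
  classical
  have hn : 0 < n := lt_of_lt_of_le hs hsn
  set z : Fin n := ⟨0, hn⟩ with hz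
  -- the square relation
  have hsq : ∀ {p : ℕ} {S T T' U : Finset (Fin n)},
      S.card = p → T.card = p + 1 → T'.card = p + 1 → U.card = p + 2 →
      S ⊆ T → T ⊆ U → S ⊆ T' → T' ⊆ U → T ≠ T' →
      c S T * c T U + c S T' * c T' U = 0 := by
    intro p S T T' U hS hT hT' hU hST hTU hST' hT'U hne
    exact tcc_square c hc
      (fun p S hS U hU => tcc_star c d hd hdd p S hS U hU)
      (fun hS hT hT' hT'' hU h1 h2 h3 h4 h5 h6 h7 =>
        tcc_between hS hT hT' hT'' hU h1 h2 h3 h4 h5 h6 h7)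
      hS hT hT' hU hST hTU hST' hT'U hne
  -- exactness at every level
  have hexact : ∀ p : ℕ, LinearMap.ker (d (p + 1)) = LinearMap.range (d p) := by
    intro p
    apply le_antisymm
    · intro g hg
      rw [LinearMap.mem_ker] at hg
      refine ⟨tccH c z p g, ?_⟩
      funext T
      have h := tcc_homotopy c hc d hd hsq z p g T
      rw [hg] at h
      have hz0 : tccH c z (p + 1)
          (0 : {S : Finset (Fin n) // S.card = p + 1 + 1} → k) T = 0 := by
        simp only [tccH]
        split <;> simp
      rw [hz0, add_zero] at h
      exact h
    · rintro x ⟨y, rfl⟩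
      rw [LinearMap.mem_ker, ← LinearMap.comp_apply, hdd]
      rfl
  -- dimension of the terms
  have hdim : ∀ p : ℕ,
      Module.finrank k ({S : Finset (Fin n) // S.card = p} → k) = n.choose p := by
    intro p
    rw [Module.finrank_pi, Fintype.card_finset_len, Fintype.card_fin]
  -- kernel at level 0 is trivial
  have hker0 : Module.finrank k (LinearMap.ker (d 0)) = 0 := by
    have hbot : LinearMap.ker (d 0) = ⊥ := by
      apply (Submodule.eq_bot_iff _).mpr
      intro f hf
      rw [LinearMap.mem_ker] at hf
      have h1 : (d 0) f ⟨{z}, Finset.card_singleton z⟩ = 0 := by rw [hf]; rfl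
      rw [hd] at h1
      rw [Fintype.sum_eq_single
          (⟨∅, Finset.card_empty⟩ : {S : Finset (Fin n) // S.card = 0})] at h1
      · have hcne : c ∅ {z} ≠ 0 := (hc _ _).mpr ⟨Finset.empty_subset _, by simp⟩
        have hf0 : f ⟨∅, Finset.card_empty⟩ = 0 := by
          rcases mul_eq_zero.mp h1 with h | h
          · exact absurd h hcne
          · exact h
        funext S
        have hS : S = ⟨∅, Finset.card_empty⟩ :=
          Subtype.ext (Finset.card_eq_zero.mp S.2)
        rw [hS]
        exact hf0
      · intro x hx
        exact absurd (Subtype.ext (Finset.card_eq_zero.mp x.2)) hx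
    rw [hbot, finrank_bot]
  have hrk : ∀ p : ℕ, Module.finrank k (LinearMap.range (d p)) +
      Module.finrank k (LinearMap.ker (d p)) = n.choose p := by
    intro p
    rw [← hdim p]
    exact LinearMap.finrank_range_add_finrank_ker (d p)
  have hn1 : n - 1 + 1 = n := Nat.succ_pred_eq_of_pos hn
  have hkers : ∀ p : ℕ,
      Module.finrank k (LinearMap.ker (d (p + 1))) = (n - 1).choose p := by
    intro p
    induction p with
    | zero =>
      rw [hexact 0, Nat.choose_zero_right]
      have h1 := hrk 0
      rw [hker0, Nat.choose_zero_right] at h1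
      omega
    | succ q ih =>
      rw [hexact (q + 1)]
      have h1 := hrk (q + 1)
      rw [ih] at h1
      have hpascal : n.choose (q + 1) = (n - 1).choose q + (n - 1).choose (q + 1) := by
        conv_lhs => rw [← hn1]
        rw [Nat.choose_succ_succ]
      omega
  constructor
  · obtain ⟨t, rfl⟩ : ∃ t, s = t + 1 := ⟨s - 1, (Nat.succ_pred_eq_of_pos hs).symm⟩
    simpa using hkers t
  · intro p _
    exact hexact p
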